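/- arXiv:math/0701010 — 2 statements merged into one kernel-verified Lean document; each statement's English description precedes it below -/
import Mathlib

section
/- Let H be a Hopf algebra over a commutative ring k with antipode S, let A be a commutative k-algebra, and let δ : A → A be a derivation (δ(ab) = a δ(b) + δ(a) b). For an algebra homomorphism φ : H → A, define the logarithmic derivative D_δ(φ) := (φ ∘ S) ⋆ (δ ∘ φ), where ⋆ is convolution. Then D_δ(φ) is an A-valued infinitesimal character of H: D_δ(φ)(cd) = ε_A(c) · D_δ(φ)(d) + ε_A(d) · D_δ(φ)(c) for all c, d ∈ H. (Connes–Marcolli logarithmic derivative.) -/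
open TensorProduct

variable {k H A : Type*} [CommSemiring k] [Semiring H] [HopfAlgebra k H]
  [CommSemiring A] [Algebra k A]

/-- Convolution product of linear maps from a coalgebra `H` to an algebra `A`:
`f ⋆ g := m_A ∘ (f ⊗ g) ∘ Δ`. -/
noncomputable def conv (f g : H →ₗ[k] A) : H →ₗ[k] A :=
  LinearMap.mul' k A ∘ₗ TensorProduct.map f g ∘ₗ Coalgebra.comul

/-- The counit of `H` viewed as an `A`-valued map: `ε_A := u_A ∘ ε`. -/
noncomputable def epsA : H →ₗ[k] A :=
  Algebra.linearMap k A ∘ₗ Coalgebra.counit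

namespace LogDerivAux

open Coalgebra

/-- Convolution on maps `H ⊗ H → A`, using the tensor-product coalgebra structure. -/
noncomputable def conv2 (F G : H ⊗[k] H →ₗ[k] A) : H ⊗[k] H →ₗ[k] A :=
  LinearMap.mul' k A ∘ₗ TensorProduct.map F G ∘ₗ
    (TensorProduct.tensorTensorTensorComm k H H H H).toLinearMap ∘ₗ
    TensorProduct.map Coalgebra.comul Coalgebra.comul

lemma conv2_tmul (F G : H ⊗[k] H →ₗ[k] A) (x y : H)
    (rx : Coalgebra.Repr k x (H × H)) (ry : Coalgebra.Repr k y (H × H)) :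
    conv2 F G (x ⊗ₜ y) =
      ∑ i ∈ rx.index, ∑ j ∈ ry.index,
        F (rx.left i ⊗ₜ ry.left j) * G (rx.right i ⊗ₜ ry.right j) := by
  simp only [conv2, LinearMap.coe_comp, Function.comp_apply, TensorProduct.map_tmul,
    LinearEquiv.coe_coe]
  rw [← rx.eq, ← ry.eq]
  simp only [TensorProduct.sum_tmul, TensorProduct.tmul_sum, map_sum,
    TensorProduct.tensorTensorTensorComm_tmul, TensorProduct.map_tmul, LinearMap.mul'_apply]
  exact Finset.sum_comm

/-- The convolution unit on `H ⊗ H`. -/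
noncomputable def e2 : H ⊗[k] H →ₗ[k] A :=
  Algebra.linearMap k A ∘ₗ LinearMap.mul' k k ∘ₗ
    TensorProduct.map Coalgebra.counit Coalgebra.counit

lemma e2_tmul (x y : H) :
    e2 (k := k) (H := H) (A := A) (x ⊗ₜ y)
      = algebraMap k A (Coalgebra.counit x * Coalgebra.counit y) := by
  simp [e2]

lemma sum_smul_counit (x : H) (r : Coalgebra.Repr k x (H × H)) :
    ∑ i ∈ r.index, Coalgebra.counit (R := k) (r.right i) • r.left i = x := by
  have h := congrArg (TensorProduct.rid k H) (Coalgebra.sum_tmul_counit_eq r)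
  rw [map_sum] at h
  simp only [TensorProduct.rid_tmul, one_smul] at h
  exact h

lemma sum_counit_smul (x : H) (r : Coalgebra.Repr k x (H × H)) :
    ∑ i ∈ r.index, Coalgebra.counit (R := k) (r.left i) • r.right i = x := by
  have h := congrArg (TensorProduct.lid k H) (Coalgebra.sum_counit_tmul_eq r)
  rw [map_sum] at h
  simp only [TensorProduct.lid_tmul, one_smul] at h
  exact h

lemma map_smul_tmul_smul (F : H ⊗[k] H →ₗ[k] A) (a b : k) (m n : H) :
    F ((a • m) ⊗ₜ (b • n)) = F (m ⊗ₜ n) * algebraMap k A (a * b) := by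
  rw [← smul_tmul', tmul_smul, smul_smul, map_smul, Algebra.smul_def, mul_comm]

lemma conv2_e2_right (F : H ⊗[k] H →ₗ[k] A) : conv2 F e2 = F := by
  apply TensorProduct.ext'
  intro x y
  set rx := Coalgebra.Repr.arbitrary k x with hrx
  set ry := Coalgebra.Repr.arbitrary k y with hry
  rw [conv2_tmul F e2 x y rx ry]
  have step : ∀ i ∈ rx.index, ∀ j ∈ ry.index,
      F (rx.left i ⊗ₜ ry.left j) * e2 (k := k) (H := H) (A := A) (rx.right i ⊗ₜ ry.right j)
        = F ((Coalgebra.counit (R := k) (rx.right i) • rx.left i) ⊗ₜ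
            (Coalgebra.counit (R := k) (ry.right j) • ry.left j)) := by
    intro i _ j _
    rw [e2_tmul, map_smul_tmul_smul]
  calc ∑ i ∈ rx.index, ∑ j ∈ ry.index,
        F (rx.left i ⊗ₜ ry.left j) * e2 (k := k) (H := H) (A := A) (rx.right i ⊗ₜ ry.right j)
      = ∑ i ∈ rx.index, ∑ j ∈ ry.index,
        F ((Coalgebra.counit (R := k) (rx.right i) • rx.left i) ⊗ₜ
            (Coalgebra.counit (R := k) (ry.right j) • ry.left j)) := by
        refine Finset.sum_congr rfl fun i hi => Finset.sum_congr rfl fun j hj => ?_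
        exact step i hi j hj
    _ = F ((∑ i ∈ rx.index, Coalgebra.counit (R := k) (rx.right i) • rx.left i) ⊗ₜ
          (∑ j ∈ ry.index, Coalgebra.counit (R := k) (ry.right j) • ry.left j)) := by
        rw [TensorProduct.sum_tmul, map_sum]
        refine Finset.sum_congr rfl fun i _ => ?_
        rw [TensorProduct.tmul_sum, map_sum]
    _ = F (x ⊗ₜ y) := by rw [sum_smul_counit x rx, sum_smul_counit y ry]

lemma conv2_e2_left (F : H ⊗[k] H →ₗ[k] A) : conv2 e2 F = F := by
  apply TensorProduct.ext'
  intro x y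
  set rx := Coalgebra.Repr.arbitrary k x with hrx
  set ry := Coalgebra.Repr.arbitrary k y with hry
  rw [conv2_tmul e2 F x y rx ry]
  have step : ∀ i ∈ rx.index, ∀ j ∈ ry.index,
      e2 (k := k) (H := H) (A := A) (rx.left i ⊗ₜ ry.left j) * F (rx.right i ⊗ₜ ry.right j)
        = F ((Coalgebra.counit (R := k) (rx.left i) • rx.right i) ⊗ₜ
            (Coalgebra.counit (R := k) (ry.left j) • ry.right j)) := by
    intro i _ j _
    rw [e2_tmul, map_smul_tmul_smul, mul_comm]
  calc ∑ i ∈ rx.index, ∑ j ∈ ry.index,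
        e2 (k := k) (H := H) (A := A) (rx.left i ⊗ₜ ry.left j) * F (rx.right i ⊗ₜ ry.right j)
      = ∑ i ∈ rx.index, ∑ j ∈ ry.index,
        F ((Coalgebra.counit (R := k) (rx.left i) • rx.right i) ⊗ₜ
            (Coalgebra.counit (R := k) (ry.left j) • ry.right j)) := by
        refine Finset.sum_congr rfl fun i hi => Finset.sum_congr rfl fun j hj => ?_
        exact step i hi j hj
    _ = F ((∑ i ∈ rx.index, Coalgebra.counit (R := k) (rx.left i) • rx.right i) ⊗ₜ
          (∑ j ∈ ry.index, Coalgebra.counit (R := k) (ry.left j) • ry.right j)) := by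
        rw [TensorProduct.sum_tmul, map_sum]
        refine Finset.sum_congr rfl fun i _ => ?_
        rw [TensorProduct.tmul_sum, map_sum]
    _ = F (x ⊗ₜ y) := by rw [sum_counit_smul x rx, sum_counit_smul y ry]

lemma conv2_assoc (F G K : H ⊗[k] H →ₗ[k] A) :
    conv2 (conv2 F G) K = conv2 F (conv2 G K) := by
  apply TensorProduct.ext'
  intro x y
  set rx := Coalgebra.Repr.arbitrary k x with hrx
  set ry := Coalgebra.Repr.arbitrary k y with hry
  set rx1 : (i : H × H) → Coalgebra.Repr k (rx.left i) (H × H) :=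
    fun i => Coalgebra.Repr.arbitrary k (rx.left i) with hrx1
  set rx2 : (i : H × H) → Coalgebra.Repr k (rx.right i) (H × H) :=
    fun i => Coalgebra.Repr.arbitrary k (rx.right i) with hrx2
  set ry1 : (j : H × H) → Coalgebra.Repr k (ry.left j) (H × H) :=
    fun j => Coalgebra.Repr.arbitrary k (ry.left j) with hry1
  set ry2 : (j : H × H) → Coalgebra.Repr k (ry.right j) (H × H) :=
    fun j => Coalgebra.Repr.arbitrary k (ry.right j) with hry2
  set Xi : (H ⊗[k] (H ⊗[k] H)) ⊗[k] (H ⊗[k] (H ⊗[k] H)) →ₗ[k] A :=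
    LinearMap.mul' k A ∘ₗ
      TensorProduct.map F
        (LinearMap.mul' k A ∘ₗ TensorProduct.map G K ∘ₗ
          (TensorProduct.tensorTensorTensorComm k H H H H).toLinearMap) ∘ₗ
      (TensorProduct.tensorTensorTensorComm k H (H ⊗[k] H) H (H ⊗[k] H)).toLinearMap
    with hXidef
  have hXi : ∀ a b c d e f : H,
      Xi ((a ⊗ₜ (b ⊗ₜ c)) ⊗ₜ (d ⊗ₜ (e ⊗ₜ f)))
        = F (a ⊗ₜ d) * (G (b ⊗ₜ e) * K (c ⊗ₜ f)) := by
    intro a b c d e f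
    simp [hXidef, LinearMap.mul'_apply]
  have hx := Coalgebra.sum_tmul_tmul_eq rx rx1 rx2
  have hy := Coalgebra.sum_tmul_tmul_eq ry ry1 ry2
  have key : Xi ((∑ i ∈ rx.index, ∑ p ∈ (rx1 i).index,
        (rx1 i).left p ⊗ₜ[k] ((rx1 i).right p ⊗ₜ[k] rx.right i)) ⊗ₜ
      (∑ j ∈ ry.index, ∑ q ∈ (ry1 j).index,
        (ry1 j).left q ⊗ₜ[k] ((ry1 j).right q ⊗ₜ[k] ry.right j)))
      = Xi ((∑ i ∈ rx.index, ∑ p ∈ (rx2 i).index,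
        rx.left i ⊗ₜ[k] ((rx2 i).left p ⊗ₜ[k] (rx2 i).right p)) ⊗ₜ
      (∑ j ∈ ry.index, ∑ q ∈ (ry2 j).index,
        ry.left j ⊗ₜ[k] ((ry2 j).left q ⊗ₜ[k] (ry2 j).right q))) := by
    rw [hx, hy]
  have expandL : Xi ((∑ i ∈ rx.index, ∑ p ∈ (rx1 i).index,
        (rx1 i).left p ⊗ₜ[k] ((rx1 i).right p ⊗ₜ[k] rx.right i)) ⊗ₜ
      (∑ j ∈ ry.index, ∑ q ∈ (ry1 j).index,
        (ry1 j).left q ⊗ₜ[k] ((ry1 j).right q ⊗ₜ[k] ry.right j)))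
      = ∑ i ∈ rx.index, ∑ p ∈ (rx1 i).index, ∑ j ∈ ry.index, ∑ q ∈ (ry1 j).index,
          F ((rx1 i).left p ⊗ₜ (ry1 j).left q) *
            (G ((rx1 i).right p ⊗ₜ (ry1 j).right q) * K (rx.right i ⊗ₜ ry.right j)) := by
    rw [TensorProduct.sum_tmul, map_sum]
    refine Finset.sum_congr rfl fun i _ => ?_
    rw [TensorProduct.sum_tmul, map_sum]
    refine Finset.sum_congr rfl fun p _ => ?_
    rw [TensorProduct.tmul_sum, map_sum]
    refine Finset.sum_congr rfl fun j _ => ?_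
    rw [TensorProduct.tmul_sum, map_sum]
    exact Finset.sum_congr rfl fun q _ => hXi _ _ _ _ _ _
  have expandR : Xi ((∑ i ∈ rx.index, ∑ p ∈ (rx2 i).index,
        rx.left i ⊗ₜ[k] ((rx2 i).left p ⊗ₜ[k] (rx2 i).right p)) ⊗ₜ
      (∑ j ∈ ry.index, ∑ q ∈ (ry2 j).index,
        ry.left j ⊗ₜ[k] ((ry2 j).left q ⊗ₜ[k] (ry2 j).right q)))
      = ∑ i ∈ rx.index, ∑ p ∈ (rx2 i).index, ∑ j ∈ ry.index, ∑ q ∈ (ry2 j).index,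
          F (rx.left i ⊗ₜ ry.left j) *
            (G ((rx2 i).left p ⊗ₜ (ry2 j).left q) * K ((rx2 i).right p ⊗ₜ (ry2 j).right q)) := by
    rw [TensorProduct.sum_tmul, map_sum]
    refine Finset.sum_congr rfl fun i _ => ?_
    rw [TensorProduct.sum_tmul, map_sum]
    refine Finset.sum_congr rfl fun p _ => ?_
    rw [TensorProduct.tmul_sum, map_sum]
    refine Finset.sum_congr rfl fun j _ => ?_
    rw [TensorProduct.tmul_sum, map_sum]
    exact Finset.sum_congr rfl fun q _ => hXi _ _ _ _ _ _
  rw [conv2_tmul (conv2 F G) K x y rx ry, conv2_tmul F (conv2 G K) x y rx ry]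
  have lhs_eq : ∑ i ∈ rx.index, ∑ j ∈ ry.index,
        conv2 F G (rx.left i ⊗ₜ ry.left j) * K (rx.right i ⊗ₜ ry.right j)
      = ∑ i ∈ rx.index, ∑ p ∈ (rx1 i).index, ∑ j ∈ ry.index, ∑ q ∈ (ry1 j).index,
          F ((rx1 i).left p ⊗ₜ (ry1 j).left q) *
            (G ((rx1 i).right p ⊗ₜ (ry1 j).right q) * K (rx.right i ⊗ₜ ry.right j)) := by
    refine Finset.sum_congr rfl fun i _ => ?_
    rw [Finset.sum_comm]
    refine Finset.sum_congr rfl fun j _ => ?_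
    rw [conv2_tmul F G _ _ (rx1 i) (ry1 j), Finset.sum_mul]
    refine Finset.sum_congr rfl fun p _ => ?_
    rw [Finset.sum_mul]
    exact Finset.sum_congr rfl fun q _ => mul_assoc _ _ _
  have rhs_eq : ∑ i ∈ rx.index, ∑ j ∈ ry.index,
        F (rx.left i ⊗ₜ ry.left j) * conv2 G K (rx.right i ⊗ₜ ry.right j)
      = ∑ i ∈ rx.index, ∑ p ∈ (rx2 i).index, ∑ j ∈ ry.index, ∑ q ∈ (ry2 j).index,
          F (rx.left i ⊗ₜ ry.left j) *
            (G ((rx2 i).left p ⊗ₜ (ry2 j).left q) * K ((rx2 i).right p ⊗ₜ (ry2 j).right q)) := by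
    refine Finset.sum_congr rfl fun i _ => ?_
    rw [Finset.sum_comm]
    refine Finset.sum_congr rfl fun j _ => ?_
    rw [conv2_tmul G K _ _ (rx2 i) (ry2 j), Finset.mul_sum]
    refine Finset.sum_congr rfl fun p _ => ?_
    rw [Finset.mul_sum]
  rw [lhs_eq, rhs_eq, ← expandL, ← expandR, key]

/-- A representation of the comultiplication of a product from representations of the factors. -/
noncomputable def mulRepr (x y : H) (rx : Coalgebra.Repr k x (H × H)) (ry : Coalgebra.Repr k y (H × H)) :
    Coalgebra.Repr k (x * y) ((H × H) × (H × H)) where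
  index := rx.index ×ˢ ry.index
  left := fun p => rx.left p.1 * ry.left p.2
  right := fun p => rx.right p.1 * ry.right p.2
  eq := by
    rw [Finset.sum_product, ← Bialgebra.comulAlgHom_apply k H, map_mul,
      Bialgebra.comulAlgHom_apply, Bialgebra.comulAlgHom_apply, ← rx.eq, ← ry.eq,
      Finset.sum_mul_sum]
    simp [Algebra.TensorProduct.tmul_mul_tmul]

@[simp] lemma mulRepr_index (x y : H) (rx : Coalgebra.Repr k x (H × H)) (ry : Coalgebra.Repr k y (H × H)) :
    (mulRepr x y rx ry).index = rx.index ×ˢ ry.index := rfl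

@[simp] lemma mulRepr_left (x y : H) (rx : Coalgebra.Repr k x (H × H)) (ry : Coalgebra.Repr k y (H × H))
    (p : (H × H) × (H × H)) : (mulRepr x y rx ry).left p = rx.left p.1 * ry.left p.2 := rfl

@[simp] lemma mulRepr_right (x y : H) (rx : Coalgebra.Repr k x (H × H)) (ry : Coalgebra.Repr k y (H × H))
    (p : (H × H) × (H × H)) : (mulRepr x y rx ry).right p = rx.right p.1 * ry.right p.2 := rfl

lemma mulRepr_sum {M : Type*} [AddCommMonoid M] (x y : H) (rx : Coalgebra.Repr k x (H × H))
    (ry : Coalgebra.Repr k y (H × H)) (g : H → H → M) :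
    ∑ p ∈ (mulRepr x y rx ry).index,
        g ((mulRepr x y rx ry).left p) ((mulRepr x y rx ry).right p)
      = ∑ i ∈ rx.index, ∑ j ∈ ry.index,
          g (rx.left i * ry.left j) (rx.right i * ry.right j) :=
  Finset.sum_product _ _ _

lemma conv_repr {ι : Type*} (f g : H →ₗ[k] A) (a : H) (r : Coalgebra.Repr k a ι) :
    conv f g a = ∑ i ∈ r.index, f (r.left i) * g (r.right i) := by
  simp only [conv, LinearMap.coe_comp, Function.comp_apply]
  rw [← r.eq]
  simp [LinearMap.mul'_apply]

/-- Anti-multiplicativity of `φ ∘ S` for a commutative target. -/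
lemma apply_antipode_mul (φ : H →ₐ[k] A) (x y : H) :
    φ (HopfAlgebra.antipode (R := k) (x * y)) =
      φ (HopfAlgebra.antipode (R := k) x) * φ (HopfAlgebra.antipode (R := k) y) := by
  set ψ : H →ₗ[k] A := φ.toLinearMap ∘ₗ HopfAlgebra.antipode (R := k) with hψ
  set Φ : H ⊗[k] H →ₗ[k] A := φ.toLinearMap ∘ₗ LinearMap.mul' k H with hΦ
  set F : H ⊗[k] H →ₗ[k] A := ψ ∘ₗ LinearMap.mul' k H with hF
  set G : H ⊗[k] H →ₗ[k] A := LinearMap.mul' k A ∘ₗ TensorProduct.map ψ ψ with hG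
  have hFΦ : conv2 F Φ = e2 := by
    apply TensorProduct.ext'
    intro a b
    set ra := Coalgebra.Repr.arbitrary k a with hra
    set rb := Coalgebra.Repr.arbitrary k b with hrb
    rw [conv2_tmul F Φ a b ra rb, e2_tmul]
    calc ∑ i ∈ ra.index, ∑ j ∈ rb.index,
          F (ra.left i ⊗ₜ rb.left j) * Φ (ra.right i ⊗ₜ rb.right j)
        = ∑ i ∈ ra.index, ∑ j ∈ rb.index,
            φ (HopfAlgebra.antipode (R := k) (ra.left i * rb.left j) *
              (ra.right i * rb.right j)) := by
          refine Finset.sum_congr rfl fun i _ => Finset.sum_congr rfl fun j _ => ?_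
          simp only [hF, hΦ, hψ, LinearMap.coe_comp, Function.comp_apply,
            LinearMap.mul'_apply, AlgHom.toLinearMap_apply, map_mul]
      _ = ∑ p ∈ (mulRepr a b ra rb).index,
            φ (HopfAlgebra.antipode (R := k) ((mulRepr a b ra rb).left p) *
              (mulRepr a b ra rb).right p) :=
          (mulRepr_sum a b ra rb
            (fun u v => φ (HopfAlgebra.antipode (R := k) u * v))).symm
      _ = φ (∑ p ∈ (mulRepr a b ra rb).index,
            HopfAlgebra.antipode (R := k) ((mulRepr a b ra rb).left p) *
              (mulRepr a b ra rb).right p) := (map_sum φ _ _).symm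
      _ = (algebraMap k A) (Coalgebra.counit (R := k) a * Coalgebra.counit (R := k) b) := by
          rw [HopfAlgebra.sum_antipode_mul_eq_smul (mulRepr a b ra rb),
            map_smul, map_one, Bialgebra.counit_mul, Algebra.algebraMap_eq_smul_one]
  have hΦG : conv2 Φ G = e2 := by
    apply TensorProduct.ext'
    intro a b
    set ra := Coalgebra.Repr.arbitrary k a with hra
    set rb := Coalgebra.Repr.arbitrary k b with hrb
    rw [conv2_tmul Φ G a b ra rb, e2_tmul]
    have : ∑ i ∈ ra.index, ∑ j ∈ rb.index,
          Φ (ra.left i ⊗ₜ rb.left j) * G (ra.right i ⊗ₜ rb.right j)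
        = (∑ i ∈ ra.index, φ (ra.left i * HopfAlgebra.antipode (R := k) (ra.right i))) *
          (∑ j ∈ rb.index, φ (rb.left j * HopfAlgebra.antipode (R := k) (rb.right j))) := by
      rw [Finset.sum_mul_sum]
      refine Finset.sum_congr rfl fun i _ => Finset.sum_congr rfl fun j _ => ?_
      simp only [hΦ, hG, hψ, LinearMap.coe_comp, Function.comp_apply, LinearMap.mul'_apply,
        AlgHom.toLinearMap_apply, TensorProduct.map_tmul, map_mul]
      ring
    rw [this, ← map_sum, ← map_sum, HopfAlgebra.sum_mul_antipode_eq_smul ra,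
      HopfAlgebra.sum_mul_antipode_eq_smul rb, map_smul, map_smul, map_one,
      smul_mul_smul_comm, one_mul, Algebra.algebraMap_eq_smul_one]
  have hFG : F = G := by
    calc F = conv2 F e2 := (conv2_e2_right F).symm
      _ = conv2 F (conv2 Φ G) := by rw [hΦG]
      _ = conv2 (conv2 F Φ) G := (conv2_assoc F Φ G).symm
      _ = conv2 e2 G := by rw [hFΦ]
      _ = G := conv2_e2_left G
  have := LinearMap.congr_fun hFG (x ⊗ₜ y)
  simpa [hF, hG, hψ, LinearMap.mul'_apply] using this

end LogDerivAux

open LogDerivAux Coalgebra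

/-- **Connes–Marcolli logarithmic derivative.** Let `H` be a Hopf algebra with antipode `S`,
`A` a commutative algebra, `δ : A → A` a derivation and `φ : H → A` an algebra homomorphism.
Then the logarithmic derivative `D_δ(φ) := (φ ∘ S) ⋆ (δ ∘ φ)` is an `A`-valued
infinitesimal character of `H`. -/
theorem logarithmic_derivative_infinitesimal_character
    (δ : A →ₗ[k] A) (hδ : ∀ a b : A, δ (a * b) = a * δ b + δ a * b)
    (φ : H →ₐ[k] A) :
    ∀ c d : H,
      conv (φ.toLinearMap ∘ₗ HopfAlgebra.antipode (R := k)) (δ ∘ₗ φ.toLinearMap) (c * d) =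
        epsA (k := k) c *
            conv (φ.toLinearMap ∘ₗ HopfAlgebra.antipode (R := k)) (δ ∘ₗ φ.toLinearMap) d +
          epsA (k := k) d *
            conv (φ.toLinearMap ∘ₗ HopfAlgebra.antipode (R := k)) (δ ∘ₗ φ.toLinearMap) c := by
  intro c d
  set rc := Coalgebra.Repr.arbitrary k c with hrc
  set rd := Coalgebra.Repr.arbitrary k d with hrd
  rw [conv_repr _ _ (c * d) (mulRepr c d rc rd), conv_repr _ _ d rd, conv_repr _ _ c rc]
  have hsumc : ∑ i ∈ rc.index,
      φ (HopfAlgebra.antipode (R := k) (rc.left i)) * φ (rc.right i)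
      = Coalgebra.counit (R := k) c • (1 : A) := by
    have : ∑ i ∈ rc.index,
        φ (HopfAlgebra.antipode (R := k) (rc.left i)) * φ (rc.right i)
        = φ (∑ i ∈ rc.index, HopfAlgebra.antipode (R := k) (rc.left i) * rc.right i) := by
      rw [map_sum]; exact Finset.sum_congr rfl fun i _ => (map_mul φ _ _).symm
    rw [this, HopfAlgebra.sum_antipode_mul_eq_smul rc, map_smul, map_one]
  have hsumd : ∑ j ∈ rd.index,
      φ (HopfAlgebra.antipode (R := k) (rd.left j)) * φ (rd.right j)
      = Coalgebra.counit (R := k) d • (1 : A) := by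
    have : ∑ j ∈ rd.index,
        φ (HopfAlgebra.antipode (R := k) (rd.left j)) * φ (rd.right j)
        = φ (∑ j ∈ rd.index, HopfAlgebra.antipode (R := k) (rd.left j) * rd.right j) := by
      rw [map_sum]; exact Finset.sum_congr rfl fun j _ => (map_mul φ _ _).symm
    rw [this, HopfAlgebra.sum_antipode_mul_eq_smul rd, map_smul, map_one]
  have expand : ∑ p ∈ (mulRepr c d rc rd).index,
      (φ.toLinearMap ∘ₗ HopfAlgebra.antipode (R := k)) ((mulRepr c d rc rd).left p) *
        (δ ∘ₗ φ.toLinearMap) ((mulRepr c d rc rd).right p)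
      = (∑ i ∈ rc.index, ∑ j ∈ rd.index,
          (φ (HopfAlgebra.antipode (R := k) (rc.left i)) * φ (rc.right i)) *
            (φ (HopfAlgebra.antipode (R := k) (rd.left j)) * δ (φ (rd.right j)))) +
        (∑ i ∈ rc.index, ∑ j ∈ rd.index,
          (φ (HopfAlgebra.antipode (R := k) (rd.left j)) * φ (rd.right j)) *
            (φ (HopfAlgebra.antipode (R := k) (rc.left i)) * δ (φ (rc.right i)))) := by
    calc ∑ p ∈ (mulRepr c d rc rd).index,
        (φ.toLinearMap ∘ₗ HopfAlgebra.antipode (R := k)) ((mulRepr c d rc rd).left p) *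
          (δ ∘ₗ φ.toLinearMap) ((mulRepr c d rc rd).right p)
        = ∑ i ∈ rc.index, ∑ j ∈ rd.index,
            (φ.toLinearMap ∘ₗ HopfAlgebra.antipode (R := k)) (rc.left i * rd.left j) *
              (δ ∘ₗ φ.toLinearMap) (rc.right i * rd.right j) :=
          mulRepr_sum c d rc rd
            (fun u v => (φ.toLinearMap ∘ₗ HopfAlgebra.antipode (R := k)) u *
              (δ ∘ₗ φ.toLinearMap) v)
      _ = _ := by
          rw [← Finset.sum_add_distrib]
          refine Finset.sum_congr rfl fun i _ => ?_
          rw [← Finset.sum_add_distrib]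
          refine Finset.sum_congr rfl fun j _ => ?_
          simp only [LinearMap.coe_comp, Function.comp_apply, AlgHom.toLinearMap_apply]
          rw [apply_antipode_mul φ, map_mul, hδ]
          ring
  have t2 : (∑ i ∈ rc.index, ∑ j ∈ rd.index,
        (φ (HopfAlgebra.antipode (R := k) (rd.left j)) * φ (rd.right j)) *
          (φ (HopfAlgebra.antipode (R := k) (rc.left i)) * δ (φ (rc.right i))))
      = (∑ j ∈ rd.index, φ (HopfAlgebra.antipode (R := k) (rd.left j)) * φ (rd.right j)) *
        (∑ i ∈ rc.index, φ (HopfAlgebra.antipode (R := k) (rc.left i)) * δ (φ (rc.right i))) := by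
    rw [Finset.sum_comm, ← Finset.sum_mul_sum]
  rw [expand, t2, ← Finset.sum_mul_sum, hsumc, hsumd]
  have hec : epsA (k := k) c = Coalgebra.counit (R := k) c • (1 : A) := by
    simp [epsA, Algebra.algebraMap_eq_smul_one]
  have hed : epsA (k := k) d = Coalgebra.counit (R := k) d • (1 : A) := by
    simp [epsA, Algebra.algebraMap_eq_smul_one]
  rw [hec, hed]
  simp only [LinearMap.coe_comp, Function.comp_apply, AlgHom.toLinearMap_apply]
end

section
/- Let A be an associative unital algebra over a field of characteristic zero (e.g. a ℚ-algebra), θ a scalar, and R : A → A a Rota–Baxter operator of weight θ. Fix x ∈ A. Define the Rota–Baxter words by (Rx)^{[0]} := 1 and (Rx)^{[m+1]} := R( x · (Rx)^{[m]} ), and define C_k := R( x ·_R ( x ·_R ( ⋯ ( x ·_R x ) ⋯ ) ) ) with k factors x and right-nested pre-Lie products a ·_R b := aR(b) − R(b)a + θba (so C₁ = R(x)). Then for every n ≥ 1: (Rx)^{[n]} = Σ over all compositions (k₁, …, k_l) of n of C_{k₁} C_{k₂} ⋯ C_{k_l} / ( k_l · (k_{l−1} + k_l) · ⋯ · (k₁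 + k₂ + ⋯ + k_l) ), i.e. the ordered product of the C_{k_i} divided by the product over i of the suffix sums k_i + k_{i+1} + ⋯ + k_l. In particular 2!(Rx)^{[2]} = C₁² + C₂ and 3!(Rx)^{[3]} = C₁³ + 2C₂C₁ + C₁C₂ + 2C₃. -/
variable {K A : Type*} [Field K] [CharZero K] [Ring A] [Algebra K A]

/-- The pre-Lie product associated to a Rota–Baxter operator:
`a ·_R b := aR(b) − R(b)a + θba`. -/
def preLieRB (R : A →ₗ[K] A) (θ : K) (a b : A) : A :=
  a * R b - R b * a + θ • (b * a)

/-- Rota–Baxter words: `(Rx)^{[0]} := 1`, `(Rx)^{[m+1]} := R(x·(Rx)^{[m]})`. -/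
def rbWord (R : A →ₗ[K] A) (x : A) : ℕ → A
  | 0 => 1
  | m + 1 => R (x * rbWord R x m)

/-- Right-nested pre-Lie powers of `x`: `preLiePow 0 = x`,
`preLiePow (m+1) = x ·_R preLiePow m`. -/
def preLiePow (R : A →ₗ[K] A) (θ : K) (x : A) : ℕ → A
  | 0 => x
  | m + 1 => preLieRB R θ x (preLiePow R θ x m)

/-- `C_k := R(x ·_R (x ·_R ⋯ (x ·_R x)⋯))` with `k` factors `x`, so `C₁ = R(x)`. -/
def CLam (R : A →ₗ[K] A) (θ : K) (x : A) (k : ℕ) : A :=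
  R (preLiePow R θ x (k - 1))

/-- The denominator `k_l·(k_{l−1}+k_l)⋯(k₁+⋯+k_l)` (product of suffix sums) of a
composition with blocks `[k₁, …, k_l]`. -/
def suffixDen : List ℕ → ℕ
  | [] => 1
  | a :: t => (a + t.sum) * suffixDen t

section Aux

variable (θ : K) (R : A →ₗ[K] A) (x : A)

lemma lam_key (hR : ∀ a b : A, R a * R b = R (R a * b) + R (a * R b) - θ • R (a * b))
    (k m : ℕ) :
    R (preLiePow R θ x k) * rbWord R x (m + 1)
      = R (x * (R (preLiePow R θ x k) * rbWord R x m))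
        + R (preLiePow R θ x k * rbWord R x (m + 1))
        - R (preLiePow R θ x (k + 1) * rbWord R x m) := by
  have h2 : R (preLiePow R θ x k) * (x * rbWord R x m)
      = x * (R (preLiePow R θ x k) * rbWord R x m)
        - preLiePow R θ x (k + 1) * rbWord R x m
        + θ • (preLiePow R θ x k * (x * rbWord R x m)) := by
    show _ = _ - preLieRB R θ x (preLiePow R θ x k) * rbWord R x m + _
    rw [preLieRB]
    simp only [sub_mul, add_mul, smul_mul_assoc, mul_assoc]
    abel
  have h1 := hR (preLiePow R θ x k) (x * rbWord R x m)
  rw [h2] at h1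
  show R (preLiePow R θ x k) * R (x * rbWord R x m) = _
  rw [h1]
  simp only [map_add, map_sub, map_smul]
  show _ = _ + R (preLiePow R θ x k * R (x * rbWord R x m)) - _
  abel

lemma lam_rec (hR : ∀ a b : A, R a * R b = R (R a * b) + R (a * R b) - θ • R (a * b))
    (n : ℕ) :
    (n + 1) • rbWord R x (n + 1)
      = ∑ k ∈ Finset.range (n + 1), CLam R θ x (k + 1) * rbWord R x (n - k) := by
  induction n with
  | zero =>
      simp [rbWord, CLam, preLiePow]
  | succ n ih =>
      have hsplit : ∑ k ∈ Finset.range (n + 2), CLam R θ x (k + 1) * rbWord R x (n + 1 - k)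
          = (∑ k ∈ Finset.range (n + 1), CLam R θ x (k + 1) * rbWord R x (n + 1 - k))
            + CLam R θ x (n + 2) * rbWord R x 0 := by
        rw [Finset.sum_range_succ]
        simp
      rw [hsplit]
      have hterm : ∀ k ∈ Finset.range (n + 1),
          CLam R θ x (k + 1) * rbWord R x (n + 1 - k)
            = R (x * (R (preLiePow R θ x k) * rbWord R x (n - k)))
              + (R (preLiePow R θ x k * rbWord R x (n + 1 - k))
                - R (preLiePow R θ x (k + 1) * rbWord R x (n + 1 - (k + 1)))) := by
        intro k hk
        have hk' : k ≤ n := Nat.lt_succ_iff.mp (Finset.mem_range.mp hk)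
        have e1 : n + 1 - k = (n - k) + 1 := by omega
        have e2 : n + 1 - (k + 1) = n - k := by omega
        rw [e1, e2, CLam]
        simp only [Nat.add_sub_cancel]
        rw [lam_key θ R x hR k (n - k)]
        abel
      rw [Finset.sum_congr rfl hterm, Finset.sum_add_distrib]
      have htel : ∑ k ∈ Finset.range (n + 1),
          (R (preLiePow R θ x k * rbWord R x (n + 1 - k))
            - R (preLiePow R θ x (k + 1) * rbWord R x (n + 1 - (k + 1))))
          = R (preLiePow R θ x 0 * rbWord R x (n + 1))
            - R (preLiePow R θ x (n + 1) * rbWord R x 0) := by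
        have := Finset.sum_range_sub' (fun k => R (preLiePow R θ x k * rbWord R x (n + 1 - k))) (n + 1)
        simpa using this
      rw [htel]
      have hC : ∀ k, CLam R θ x (k + 1) = R (preLiePow R θ x k) := by
        intro k; rw [CLam]; simp
      have hmain : ∑ k ∈ Finset.range (n + 1),
          R (x * (R (preLiePow R θ x k) * rbWord R x (n - k)))
          = (n + 1) • rbWord R x (n + 2) := by
        rw [← map_sum]
        have : ∑ k ∈ Finset.range (n + 1), x * (R (preLiePow R θ x k) * rbWord R x (n - k))
            = x * ((n + 1) • rbWord R x (n + 1)) := by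
          rw [ih, Finset.mul_sum]
          exact Finset.sum_congr rfl fun k _ => by rw [hC]
        rw [this, mul_smul_comm, map_nsmul]
        rfl
      rw [hmain]
      have h0 : rbWord R x 0 = (1 : A) := rfl
      have hx : preLiePow R θ x 0 = x := rfl
      rw [h0, hx, mul_one, mul_one, hC (n + 1)]
      show _ = (n+1) • rbWord R x (n+2) + (R (x * rbWord R x (n+1)) - _) + _
      have : R (x * rbWord R x (n + 1)) = rbWord R x (n + 2) := rfl
      rw [this]
      rw [succ_nsmul (rbWord R x (n+2)) (n+1)]
      abel

end Aux

lemma composition_zero_blocks (c : Composition 0) : c.blocks = [] := by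
  have hs := c.blocks_sum
  cases hb : c.blocks with
  | nil => rfl
  | cons a t =>
      have ha : 0 < a := c.blocks_pos (hb ▸ (show a ∈ a :: t from List.mem_cons_self))
      rw [hb] at hs
      simp [List.sum_cons] at hs
      omega

instance : Unique (Composition 0) where
  default := ⟨[], by simp, by simp⟩
  uniq c := Composition.ext (composition_zero_blocks c)

lemma comp_blocks_ne_nil {n : ℕ} (c : Composition (n + 1)) : c.blocks ≠ [] := by
  intro h
  have hs := c.blocks_sum
  rw [h] at hs
  simp at hs

lemma sig_ext {n : ℕ} {p q : Σ k : ℕ, Composition (n - k)}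
    (h1 : p.1 = q.1) (h2 : p.2.blocks = q.2.blocks) : p = q := by
  obtain ⟨k, c⟩ := p
  obtain ⟨l, d⟩ := q
  cases h1
  have : c = d := Composition.ext h2
  rw [this]


def consComp (n k : ℕ) (hk : k ≤ n) (c : Composition (n - k)) : Composition (n + 1) where
  blocks := (k + 1) :: c.blocks
  blocks_pos := by
    intro i hi
    rcases List.mem_cons.mp hi with h | h
    · omega
    · exact c.blocks_pos h
  blocks_sum := by
    have := c.blocks_sum
    simp only [List.sum_cons, this]
    omega

lemma head!_facts {n : ℕ} (c : Composition (n + 1)) :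
    1 ≤ c.blocks.head! ∧ c.blocks.head! + c.blocks.tail.sum = n + 1 := by
  have hne := comp_blocks_ne_nil c
  have h := c.blocks_sum
  have hcons := List.cons_head!_tail hne
  constructor
  · exact c.blocks_pos (List.head!_mem_self hne)
  · rw [← hcons, List.sum_cons] at h
    exact h

def tailComp {n : ℕ} (c : Composition (n + 1)) : Composition (n - (c.blocks.head! - 1)) where
  blocks := c.blocks.tail
  blocks_pos := fun hi => c.blocks_pos (List.mem_of_mem_tail hi)
  blocks_sum := by
    have h := head!_facts c
    omega

lemma comp_split {M : Type*} [AddCommMonoid M] (n : ℕ) (g : List ℕ → M) :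
    ∑ c : Composition (n + 1), g c.blocks
      = ∑ k ∈ Finset.range (n + 1), ∑ c : Composition (n - k), g ((k + 1) :: c.blocks) := by
  rw [Finset.sum_sigma' (Finset.range (n + 1))
    (fun k => (Finset.univ : Finset (Composition (n - k))))
    (fun k c => g ((k + 1) :: c.blocks))]
  refine Finset.sum_bij'
    (fun (c : Composition (n + 1)) (_ : c ∈ Finset.univ) =>
      (⟨c.blocks.head! - 1, tailComp c⟩ : Σ k : ℕ, Composition (n - k)))
    (fun p hp => consComp n p.1
      (Nat.lt_succ_iff.mp (Finset.mem_range.mp (Finset.mem_sigma.mp hp).1)) p.2)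
    ?_ ?_ ?_ ?_ ?_
  · intro c _
    have h := head!_facts c
    exact Finset.mem_sigma.mpr
      ⟨Finset.mem_range.mpr (by omega : c.blocks.head! - 1 < n + 1), Finset.mem_univ _⟩
  · intro p hp
    exact Finset.mem_univ _
  · intro c _
    apply Composition.ext
    show (c.blocks.head! - 1 + 1) :: c.blocks.tail = c.blocks
    have h := head!_facts c
    have : c.blocks.head! - 1 + 1 = c.blocks.head! := by omega
    rw [this]
    exact List.cons_head!_tail (comp_blocks_ne_nil c)
  · intro p hp
    obtain ⟨k, c⟩ := p
    apply sig_ext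
    · show ((k + 1) :: c.blocks).head! - 1 = k
      simp
    · show ((k + 1) :: c.blocks).tail = c.blocks
      rfl
  · intro c _
    have h := head!_facts c
    have : (c.blocks.head! - 1 + 1) :: (tailComp c).blocks = c.blocks := by
      show (c.blocks.head! - 1 + 1) :: c.blocks.tail = c.blocks
      have h1 : c.blocks.head! - 1 + 1 = c.blocks.head! := by omega
      rw [h1]
      exact List.cons_head!_tail (comp_blocks_ne_nil c)
    rw [this]

section Main

variable (θ : K) (R : A →ₗ[K] A) (x : A)

lemma lam_formula (hR : ∀ a b : A, R a * R b = R (R a * b) + R (a * R b) - θ • R (a * b))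
    (n : ℕ) :
    rbWord R x n = ∑ c : Composition n,
      ((suffixDen c.blocks : K))⁻¹ • (c.blocks.map (CLam R θ x)).prod := by
  induction n using Nat.strong_induction_on with
  | _ n ih =>
    rcases n with _ | m
    · rw [Fintype.sum_unique]
      show (1 : A) = _
      have hb : ∀ c : Composition 0, c.blocks = [] := composition_zero_blocks
      rw [hb]
      simp [suffixDen]
    · have hcast : ((m + 1 : ℕ) : K) ≠ 0 := by
        exact_mod_cast Nat.succ_ne_zero m
      have hw : rbWord R x (m + 1) = ((m + 1 : ℕ) : K)⁻¹ • ((m + 1) • rbWord R x (m + 1)) := by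
        rw [← Nat.cast_smul_eq_nsmul K, inv_smul_smul₀ hcast]
      rw [hw, lam_rec θ R x hR m,
        comp_split m (fun l => ((suffixDen l : K))⁻¹ • (l.map (CLam R θ x)).prod),
        Finset.smul_sum]
      refine Finset.sum_congr rfl fun k hk => ?_
      have hk' : k ≤ m := Nat.lt_succ_iff.mp (Finset.mem_range.mp hk)
      rw [ih (m - k) (by omega), Finset.mul_sum, Finset.smul_sum]
      refine Finset.sum_congr rfl fun c _ => ?_
      have hsum : c.blocks.sum = m - k := c.blocks_sum
      have hden : suffixDen ((k + 1) :: c.blocks) = (m + 1) * suffixDen c.blocks := by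
        show ((k + 1) + c.blocks.sum) * suffixDen c.blocks = _
        rw [hsum]
        congr 1
        omega
      rw [List.map_cons, List.prod_cons, hden, Nat.cast_mul, mul_inv, mul_smul, mul_smul_comm]


end Main

/-- **Lam's formula.** For a Rota–Baxter operator `R` of weight `θ` over a field of
characteristic zero and any `n ≥ 1`, the Rota–Baxter word `(Rx)^{[n]}` equals the sum
over all compositions `(k₁,…,k_l)` of `n` of
`C_{k₁}⋯C_{k_l} / (k_l(k_{l−1}+k_l)⋯(k₁+⋯+k_l))`. In particular
`2!(Rx)^{[2]} = C₁² + C₂` and `3!(Rx)^{[3]} = C₁³ + 2C₂C₁ + C₁C₂ + 2C₃`. -/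
theorem lam_rota_baxter_word_formula (θ : K) (R : A →ₗ[K] A)
    (hR : ∀ a b : A, R a * R b = R (R a * b) + R (a * R b) - θ • R (a * b)) (x : A) :
    (∀ n : ℕ, 1 ≤ n → rbWord R x n =
      ∑ c : Composition n,
        ((suffixDen c.blocks : K))⁻¹ • (c.blocks.map (CLam R θ x)).prod) ∧
    Nat.factorial 2 • rbWord R x 2 = CLam R θ x 1 ^ 2 + CLam R θ x 2 ∧
    Nat.factorial 3 • rbWord R x 3 =
      CLam R θ x 1 ^ 3 + 2 • (CLam R θ x 2 * CLam R θ x 1) + CLam R θ x 1 * CLam R θ x 2 +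
        2 • CLam R θ x 3 := by

  have h1 : rbWord R x 1 = CLam R θ x 1 := by
    simp [rbWord, CLam, preLiePow]
  have h2 : (2 : ℕ) • rbWord R x 2 = CLam R θ x 1 ^ 2 + CLam R θ x 2 := by
    have h := lam_rec θ R x hR 1
    rw [Finset.sum_range_succ, Finset.sum_range_one] at h
    simp only [zero_add, Nat.sub_zero, Nat.sub_self] at h
    rw [h1] at h
    have hw0 : rbWord R x 0 = (1 : A) := rfl
    rw [hw0, mul_one, ← sq] at h
    exact h
  have h3 : (3 : ℕ) • rbWord R x 3
      = CLam R θ x 1 * rbWord R x 2 + CLam R θ x 2 * CLam R θ x 1 + CLam R θ x 3 := by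
    have h := lam_rec θ R x hR 2
    rw [Finset.sum_range_succ, Finset.sum_range_succ, Finset.sum_range_one] at h
    simp only [zero_add, Nat.sub_zero, Nat.sub_self] at h
    have e : (2 : ℕ) - 1 = 1 := rfl
    rw [e, h1] at h
    have hw0 : rbWord R x 0 = (1 : A) := rfl
    rw [hw0, mul_one] at h
    exact h
  refine ⟨fun n _ => lam_formula θ R x hR n, ?_, ?_⟩
  · have : Nat.factorial 2 = 2 := rfl
    rw [this]
    exact h2
  · have hf : Nat.factorial 3 = 2 * 3 := rfl
    rw [hf, mul_smul, h3, smul_add, smul_add, ← mul_smul_comm, h2]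
    rw [mul_add, ← pow_succ']
    abel
end
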